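/- Let k ≥ 3, n ≥ 1, let i be a peg, and let v be any vertex of the Tower of Hanoi graph H_n^k. Then every walk of minimal length (i.e., of length equal to the graph distance) from the perfect state \overline{i} to v moves the largest disk exactly zero times if v lies in the substructure [i], and exactly once otherwise; that is, the number of edges of the walk at which the position of disk n−1 changes is 0 if v(n−1) = i and 1 if v(n−1) ≠ i. -/

import Mathlib

/-- The Tower of Hanoi graph `H_n^k`: vertices are functions `Fin n → Fin k`
(disk `i` lies on peg `v i`; smaller indices are smaller disks); two states are
adjacent iff they differ by one legal move of a single disk `d`: the position of
`d` changes, all other disks stay, and no smaller disk lies on the source peg or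
the target peg of `d`. -/
def hanoiGraph (n k : ℕ) : SimpleGraph (Fin n → Fin k) where
  Adj v w := ∃ d : Fin n, v d ≠ w d ∧ (∀ i : Fin n, i ≠ d → v i = w i) ∧
    (∀ i : Fin n, i < d → v i ≠ v d ∧ v i ≠ w d)
  symm := by
    constructor; rintro v w ⟨d, h1, h2, h3⟩
    refine ⟨d, h1.symm, fun i hi => (h2 i hi).symm, fun i hi => ?_⟩
    have he : v i = w i := h2 i (ne_of_lt hi)
    have h := h3 i hi
    exact ⟨he ▸ h.2, he ▸ h.1⟩
  loopless := by constructor; rintro v ⟨d, h1, -⟩; exact h1 rfl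

/-- The number of edges of a walk in `H_n^k` at which the position of disk `d`
changes. -/
def changeCount {n k : ℕ} (d : Fin n) :
    {u v : Fin n → Fin k} → (hanoiGraph n k).Walk u v → ℕ
  | _, _, SimpleGraph.Walk.nil => 0
  | u, _, SimpleGraph.Walk.cons (v := x) _ p =>
      (if u d = x d then 0 else 1) + changeCount d p

namespace HanoiAux

open SimpleGraph Walk

variable {n k : ℕ}

lemma changeCount_cons (d : Fin n) {u x v : Fin n → Fin k}
    (h : (hanoiGraph n k).Adj u x) (p : (hanoiGraph n k).Walk x v) :
    changeCount d (SimpleGraph.Walk.cons h p)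
      = (if u d = x d then 0 else 1) + changeCount d p := rfl

lemma eq_of_changeCount_zero (d : Fin n) :
    ∀ {u v : Fin n → Fin k} (p : (hanoiGraph n k).Walk u v),
      changeCount d p = 0 → u d = v d := by
  intro u v p
  induction p with
  | nil => intro _; rfl
  | @cons u x v h p ih =>
      intro hc
      rw [changeCount_cons] at hc
      by_cases hux : u d = x d
      · rw [if_pos hux] at hc
        exact hux.trans (ih (by omega))
      · rw [if_neg hux] at hc; omega

lemma ne_of_changeCount_one (d : Fin n) :
    ∀ {u v : Fin n → Fin k} (p : (hanoiGraph n k).Walk u v),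
      changeCount d p = 1 → u d ≠ v d := by
  intro u v p
  induction p with
  | nil => intro hc; exact absurd hc (by simp [changeCount])
  | @cons u x v h p ih =>
      intro hc
      rw [changeCount_cons] at hc
      by_cases hux : u d = x d
      · rw [if_pos hux] at hc
        rw [hux]
        exact ih (by omega)
      · rw [if_neg hux] at hc
        have : changeCount d p = 0 := by omega
        rw [← eq_of_changeCount_zero d p this]
        exact hux

/-- Decompose a walk at its first move of disk `d`. -/
lemma exists_first (d : Fin n) :
    ∀ {u v : Fin n → Fin k} (p : (hanoiGraph n k).Walk u v),
      1 ≤ changeCount d p →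
      ∃ (x y : Fin n → Fin k) (q : (hanoiGraph n k).Walk u x)
        (h : (hanoiGraph n k).Adj x y) (r : (hanoiGraph n k).Walk y v),
        changeCount d q = 0 ∧ x d ≠ y d ∧
        p.length = q.length + 1 + r.length ∧
        changeCount d p = 1 + changeCount d r := by
  intro u v p
  induction p with
  | nil => intro hc; exact absurd hc (by simp [changeCount])
  | @cons u x v h p ih =>
      intro hc
      by_cases hux : u d = x d
      · have hc' : 1 ≤ changeCount d p := by
          rw [changeCount_cons, if_pos hux] at hc; omega
        obtain ⟨a, b, q, hab, r, hq0, hd, hlen, hcnt⟩ := ih hc'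
        refine ⟨a, b, SimpleGraph.Walk.cons h q, hab, r, ?_, hd, ?_, ?_⟩
        · rw [changeCount_cons, if_pos hux, hq0]
        · simp [SimpleGraph.Walk.length_cons, hlen]; omega
        · rw [changeCount_cons, if_pos hux, hcnt]; omega
      · refine ⟨u, x, SimpleGraph.Walk.nil, h, p, rfl, hux, by simp [Nat.add_comm], ?_⟩
        rw [changeCount_cons, if_neg hux]

/-- If a move changes disk `d`, then the moved disk is `d`. -/
lemma adj_d_facts (d : Fin n) {x y : Fin n → Fin k}
    (hadj : (hanoiGraph n k).Adj x y) (hxy : x d ≠ y d) :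
    (∀ j, j ≠ d → x j = y j) ∧ (∀ j, j < d → x j ≠ x d ∧ x j ≠ y d) := by
  obtain ⟨e, h1, h2, h3⟩ := hadj
  have hed : e = d := by
    by_contra hc
    exact hxy (h2 d (fun hh => hc hh.symm))
  subst hed
  exact ⟨h2, h3⟩

/-- Permuting pegs is a graph homomorphism. -/
def permHom (σ : Fin k ≃ Fin k) : hanoiGraph n k →g hanoiGraph n k where
  toFun v := σ ∘ v
  map_rel' := by
    rintro v w ⟨e, h1, h2, h3⟩
    refine ⟨e, fun hc => h1 (σ.injective hc),
      fun i hi => by simp only [Function.comp_apply, h2 i hi], fun i hi => ?_⟩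
    obtain ⟨ha, hb⟩ := h3 i hi
    exact ⟨fun hc => ha (σ.injective hc), fun hc => hb (σ.injective hc)⟩

/-- A walk with no move of the top disk `d` can be replayed with disk `d`
parked anywhere. -/
lemma walk_update (d : Fin n) (hmax : ∀ e : Fin n, e ≠ d → e < d) (c : Fin k) :
    ∀ {a b : Fin n → Fin k} (r : (hanoiGraph n k).Walk a b),
      changeCount d r = 0 →
      ∃ r' : (hanoiGraph n k).Walk (Function.update a d c) (Function.update b d c),
        r'.length = r.length := by
  intro a b r
  induction r with
  | nil => exact fun _ => ⟨SimpleGraph.Walk.nil, rfl⟩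
  | @cons a x b h r ih =>
      intro hc
      rw [changeCount_cons] at hc
      by_cases hax : a d = x d
      swap
      · rw [if_neg hax] at hc; omega
      rw [if_pos hax] at hc
      obtain ⟨r', hr'⟩ := ih (by omega)
      obtain ⟨e, h1, h2, h3⟩ := h
      have hed : e ≠ d := fun hh => h1 (hh ▸ hax)
      have hadj : (hanoiGraph n k).Adj (Function.update a d c) (Function.update x d c) := by
        refine ⟨e, ?_, ?_, ?_⟩
        · rwa [Function.update_of_ne hed, Function.update_of_ne hed]
        · intro j hj
          by_cases hjd : j = d
          · subst hjd; simp
          · rw [Function.update_of_ne hjd, Function.update_of_ne hjd]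
            exact h2 j hj
        · intro j hj
          have hjd : j ≠ d := Fin.ne_of_lt (lt_trans hj (hmax e hed))
          simp only [Function.update_of_ne hjd, Function.update_of_ne hed]
          exact h3 j hj
      exact ⟨SimpleGraph.Walk.cons hadj r', by show r'.length + 1 = r.length + 1; rw [hr']⟩

end HanoiAux

open HanoiAux SimpleGraph Walk in
/-- Main combinatorial lemma, for an arbitrary maximal disk `d`. -/
theorem hanoi_main {n k : ℕ} (d : Fin n) (hmax : ∀ e : Fin n, e ≠ d → e < d)
    (i : Fin k) (v : Fin n → Fin k)
    (p : (hanoiGraph n k).Walk (fun _ => i) v)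
    (hp : p.length = (hanoiGraph n k).dist (fun _ => i) v) :
    changeCount d p = if v d = i then 0 else 1 := by
  have hle : changeCount d p ≤ 1 := by
    by_contra hgt
    push_neg at hgt
    obtain ⟨x, y, q, h, r, hq0, hxy, hlen, hcnt⟩ := exists_first d p (by omega)
    obtain ⟨x₂, y₂, r₁, h₂, r₂, hr₁0, hx₂y₂, hlen₂, hcnt₂⟩ :=
      exists_first d r (by omega)
    have hxd : x d = i := (eq_of_changeCount_zero d q hq0).symm
    have hx₂d : x₂ d = y d := (eq_of_changeCount_zero d r₁ hr₁0).symm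
    obtain ⟨hfac1, hfac2⟩ := adj_d_facts d h hxy
    obtain ⟨hfac1₂, hfac2₂⟩ := adj_d_facts d h₂ hx₂y₂
    have hcontr : ∃ q' : (hanoiGraph n k).Walk (fun _ => i) v, q'.length < p.length := by
      by_cases hcase : y₂ d = i
      · -- the big disk returns to `i`: delete both moves
        obtain ⟨r', hr'len⟩ := walk_update d hmax i r₁ hr₁0
        have e1 : Function.update y d i = x := by
          funext j
          by_cases hj : j = d
          · subst hj; simp [hxd]
          · rw [Function.update_of_ne hj]; exact (hfac1 j hj).symm
        have e2 : Function.update x₂ d i = y₂ := by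
          funext j
          by_cases hj : j = d
          · subst hj; simp [hcase]
          · rw [Function.update_of_ne hj]; exact hfac1₂ j hj
        refine ⟨q.append ((r'.copy e1 e2).append r₂), ?_⟩
        rw [SimpleGraph.Walk.length_append, SimpleGraph.Walk.length_append,
          SimpleGraph.Walk.length_copy, hr'len]
        omega
      · -- redirect the first move of the big disk via the swap (y d, y₂ d)
        set σ : Fin k ≃ Fin k := Equiv.swap (y d) (y₂ d) with hσ
        have hi1 : i ≠ y d := hxd ▸ hxy
        have hi2 : i ≠ y₂ d := fun hh => hcase hh.symm
        have hσi : σ i = i := Equiv.swap_apply_of_ne_of_ne hi1 hi2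
        have e1 : (σ ∘ fun _ : Fin n => i) = (fun _ : Fin n => i) :=
          funext fun _ => hσi
        have e2 : σ ∘ x₂ = y₂ := by
          funext j
          by_cases hj : j = d
          · subst hj
            simp only [Function.comp_apply, hx₂d, hσ]
            rw [Equiv.swap_apply_left]
          · have hj2 := hfac2₂ j (hmax j hj)
            have ha : x₂ j ≠ y d := hx₂d ▸ hj2.1
            have hb : x₂ j ≠ y₂ d := hj2.2
            simp only [Function.comp_apply, hσ]
            rw [Equiv.swap_apply_of_ne_of_ne ha hb]
            exact hfac1₂ j hj
        have e1' : (permHom (n := n) σ) (fun _ : Fin n => i) = (fun _ : Fin n => i) := e1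
        have e2' : (permHom (n := n) σ) x₂ = y₂ := e2
        refine ⟨((((q.append (SimpleGraph.Walk.cons h r₁)).map
            (permHom σ)).copy e1' e2')).append r₂, ?_⟩
        rw [SimpleGraph.Walk.length_append, SimpleGraph.Walk.length_copy,
          SimpleGraph.Walk.length_map, SimpleGraph.Walk.length_append,
          SimpleGraph.Walk.length_cons]
        omega
    obtain ⟨q', hq'⟩ := hcontr
    have := SimpleGraph.dist_le q'
    omega
  by_cases hv : v d = i
  · rw [if_pos hv]
    have h1 : changeCount d p ≠ 1 := fun h1 =>
      (ne_of_changeCount_one d p h1) (by simp [hv])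
    omega
  · rw [if_neg hv]
    have h0 : changeCount d p ≠ 0 := fun h0 => by
      have := eq_of_changeCount_zero d p h0
      exact hv this.symm
    omega

/-- Any walk of minimal length (length equal to the graph distance) from the
perfect state `\overline{i}` to a vertex `v` of `H_n^k` moves the largest disk
(disk `n-1`) zero times if `v` lies in the substructure `[i]`, and exactly once
otherwise. -/
theorem hanoi_geodesic_moves_largest_disk_at_most_once (n k : ℕ) (hk : 3 ≤ k) (hn : 1 ≤ n)
    (i : Fin k) (v : Fin n → Fin k)
    (p : (hanoiGraph n k).Walk (fun _ => i) v)
    (hp : p.length = (hanoiGraph n k).dist (fun _ => i) v) :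
    changeCount ⟨n - 1, by omega⟩ p = if v ⟨n - 1, by omega⟩ = i then 0 else 1 := by
  apply hanoi_main
  · intro e he
    have h1 : e.val ≠ n - 1 := fun hh => he (Fin.ext hh)
    have h2 := e.isLt
    exact Fin.lt_def.mpr (by simp; omega)
  · exact hp
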